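/- Let ν ≥ 1, let c_{abc} (1 ≤ a,b,c ≤ ν) be real constants totally symmetric in (a,b,c), let f(u) := −(1/3) Σ_{a,b,c} c_{abc} u_a u_b u_c, and let Ξ be a constant invertible symmetric ν×ν matrix. Let ∇R be the 5-tensor on ℝ^{ν+2} whose components are R_{ijkl;n}, the covariant derivative curvature components of the metric g_f (these are constant on the coordinate frame since f is cubic). Define L(e_i,e_j) := δ_{0i} δ_{0j} and S(e_i,e_j,e_k) := −(1/2) ∂_i ∂_j ∂_k f. Then ∇R = ∇R_{L,S}, where ∇R_{L,S}(x_1,x_2,x_3,x_4;x_5) := S(x_1,x_4,x_5) L(x_2,x_3) + L(x_1,x_4) S(x_2,x_3,x_5) − S(x_1,x_3,x_5) L(x_2,x_4) − L(x_1,x_3) S(x_2,x_4,x_5). -/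

import Mathlib

noncomputable section

/-- The partial derivative of `h` at `p` in the `i`-th coordinate direction. -/
def pd {n : ℕ} (h : (Fin n → ℝ) → ℝ) (i : Fin n) (p : Fin n → ℝ) : ℝ :=
  fderiv ℝ h p (Pi.single i 1)

/-- The index in `Fin (ν+2)` corresponding to the coordinate `u_a`. -/
def uidx {ν : ℕ} (a : Fin ν) : Fin (ν + 2) := ⟨a.1 + 1, by omega⟩

/-- The `u`-coordinates of a point of `ℝ^{ν+2}`. -/
def uC {ν : ℕ} (p : Fin (ν + 2) → ℝ) : Fin ν → ℝ := fun a => p (uidx a)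

/-- The metric `g_f` in the coordinate frame. -/
def gmet {ν : ℕ} (f : (Fin ν → ℝ) → ℝ) (Ξ : Matrix (Fin ν) (Fin ν) ℝ)
    (p : Fin (ν + 2) → ℝ) : Matrix (Fin (ν + 2)) (Fin (ν + 2)) ℝ := fun i j =>
  if i.1 = 0 ∧ j.1 = 0 then f (uC p)
  else if (i.1 = 0 ∧ j.1 = ν + 1) ∨ (i.1 = ν + 1 ∧ j.1 = 0) then 1
  else if h : 1 ≤ i.1 ∧ i.1 ≤ ν ∧ 1 ≤ j.1 ∧ j.1 ≤ ν then
    Ξ ⟨i.1 - 1, by omega⟩ ⟨j.1 - 1, by omega⟩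
  else 0

/-- Christoffel symbols of the first kind. -/
def Γ₁ {ν : ℕ} (f : (Fin ν → ℝ) → ℝ) (Ξ : Matrix (Fin ν) (Fin ν) ℝ)
    (p : Fin (ν + 2) → ℝ) (i j k : Fin (ν + 2)) : ℝ :=
  (1 / 2) * (pd (fun q => gmet f Ξ q j k) i p + pd (fun q => gmet f Ξ q i k) j p
    - pd (fun q => gmet f Ξ q i j) k p)

/-- Christoffel symbols of the second kind. -/
def Γ₂ {ν : ℕ} (f : (Fin ν → ℝ) → ℝ) (Ξ : Matrix (Fin ν) (Fin ν) ℝ)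
    (p : Fin (ν + 2) → ℝ) (i j k : Fin (ν + 2)) : ℝ :=
  ∑ l, (gmet f Ξ p)⁻¹ k l * Γ₁ f Ξ p i j l

/-- The components of the curvature tensor. -/
def Rc {ν : ℕ} (f : (Fin ν → ℝ) → ℝ) (Ξ : Matrix (Fin ν) (Fin ν) ℝ)
    (p : Fin (ν + 2) → ℝ) (i j k l : Fin (ν + 2)) : ℝ :=
  pd (fun q => Γ₁ f Ξ q j k l) i p - pd (fun q => Γ₁ f Ξ q i k l) j p
    + ∑ n, (Γ₁ f Ξ p i n l * Γ₂ f Ξ p j k n - Γ₁ f Ξ p j n l * Γ₂ f Ξ p i k n)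

/-- The components of the covariant derivative of the curvature tensor. -/
def RcD {ν : ℕ} (f : (Fin ν → ℝ) → ℝ) (Ξ : Matrix (Fin ν) (Fin ν) ℝ)
    (p : Fin (ν + 2) → ℝ) (i j k l n : Fin (ν + 2)) : ℝ :=
  pd (fun q => Rc f Ξ q i j k l) n p
    - ∑ m, (Γ₂ f Ξ p n i m * Rc f Ξ p m j k l + Γ₂ f Ξ p n j m * Rc f Ξ p i m k l
      + Γ₂ f Ξ p n k m * Rc f Ξ p i j m l + Γ₂ f Ξ p n l m * Rc f Ξ p i j k m)

namespace NRaux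

abbrev proj' {n : ℕ} (j : Fin n) : (Fin n → ℝ) →L[ℝ] ℝ := ContinuousLinearMap.proj j

lemma pd_def {n : ℕ} (h : (Fin n → ℝ) → ℝ) (i : Fin n) (p : Fin n → ℝ) :
    fderiv ℝ h p (Pi.single i 1) = fderiv ℝ h p (Pi.single i 1) := rfl

lemma hfd_coord {n : ℕ} (j : Fin n) (p : Fin n → ℝ) :
    HasFDerivAt (fun q : Fin n → ℝ => q j) (proj' j) p := (proj' j).hasFDerivAt

lemma hfd_mono1 {n : ℕ} (r : ℝ) (a : Fin n) (p : Fin n → ℝ) :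
    HasFDerivAt (fun q : Fin n → ℝ => r * q a) (r • proj' a) p := (hfd_coord a p).const_mul r

lemma hfd_mono2 {n : ℕ} (r : ℝ) (a b : Fin n) (p : Fin n → ℝ) :
    HasFDerivAt (fun q : Fin n → ℝ => r * q a * q b)
      ((r * p a) • proj' b + p b • (r • proj' a)) p :=
  (hfd_mono1 r a p).mul (hfd_coord b p)

lemma hfd_mono3 {n : ℕ} (r : ℝ) (a b d : Fin n) (p : Fin n → ℝ) :
    HasFDerivAt (fun q : Fin n → ℝ => r * q a * q b * q d)
      ((r * p a * p b) • proj' d + p d • ((r * p a) • proj' b + p b • (r • proj' a))) p :=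
  (hfd_mono2 r a b p).mul (hfd_coord d p)

lemma sing {n : ℕ} (j i : Fin n) : (Pi.single (M := fun _ => ℝ) i 1) j = if j = i then 1 else 0 := by
  simp [Pi.single_apply]

end NRaux

namespace NRaux

lemma pd_mono3 {n : ℕ} (r : ℝ) (a b d i : Fin n) (p : Fin n → ℝ) :
    pd (fun q => r * q a * q b * q d) i p
      = (r * p a * p b) * (if d = i then 1 else 0)
        + p d * ((r * p a) * (if b = i then 1 else 0) + p b * (r * (if a = i then 1 else 0))) := by
  unfold pd
  rw [(hfd_mono3 r a b d p).fderiv]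
  simp [sing]
  split_ifs <;> ring

lemma pd_mono2 {n : ℕ} (r : ℝ) (a b i : Fin n) (p : Fin n → ℝ) :
    pd (fun q => r * q a * q b) i p
      = (r * p a) * (if b = i then 1 else 0) + p b * (r * (if a = i then 1 else 0)) := by
  unfold pd
  rw [(hfd_mono2 r a b p).fderiv]
  simp [sing]

lemma pd_mono1 {n : ℕ} (r : ℝ) (a i : Fin n) (p : Fin n → ℝ) :
    pd (fun q => r * q a) i p = r * (if a = i then 1 else 0) := by
  unfold pd
  rw [(hfd_mono1 r a p).fderiv]
  simp [sing]

lemma pd_const {n : ℕ} (r : ℝ) (i : Fin n) (p : Fin n → ℝ) :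
    pd (fun _ => r) i p = 0 := by
  unfold pd; simp

lemma pd_neg {n : ℕ} (h : (Fin n → ℝ) → ℝ) (i : Fin n) (p : Fin n → ℝ) :
    pd (fun q => -(h q)) i p = -(pd h i p) := by
  unfold pd; rw [fderiv_fun_neg]; simp

lemma pd_const_mul {n : ℕ} (h : (Fin n → ℝ) → ℝ) (r : ℝ) (i : Fin n) (p : Fin n → ℝ)
    (H : DifferentiableAt ℝ h p) :
    pd (fun q => r * h q) i p = r * pd h i p := by
  unfold pd; rw [fderiv_const_mul H r]; simp

lemma pd_sum {n : ℕ} {α : Type*} (s : Finset α) (h : α → (Fin n → ℝ) → ℝ) (i : Fin n)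
    (p : Fin n → ℝ) (H : ∀ a ∈ s, DifferentiableAt ℝ (h a) p) :
    pd (fun q => ∑ a ∈ s, h a q) i p = ∑ a ∈ s, pd (h a) i p := by
  unfold pd; rw [fderiv_fun_sum H]; simp

end NRaux

namespace NRaux

lemma diffAt_mono3 {n : ℕ} (r : ℝ) (a b d : Fin n) (p : Fin n → ℝ) :
    DifferentiableAt ℝ (fun q : Fin n → ℝ => r * q a * q b * q d) p :=
  (hfd_mono3 r a b d p).differentiableAt

lemma diffAt_mono2 {n : ℕ} (r : ℝ) (a b : Fin n) (p : Fin n → ℝ) :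
    DifferentiableAt ℝ (fun q : Fin n → ℝ => r * q a * q b) p :=
  (hfd_mono2 r a b p).differentiableAt

lemma diffAt_mono1 {n : ℕ} (r : ℝ) (a : Fin n) (p : Fin n → ℝ) :
    DifferentiableAt ℝ (fun q : Fin n → ℝ => r * q a) p :=
  (hfd_mono1 r a p).differentiableAt

section Fdefs
variable {ν : ℕ}

/-- δ_{uidx a, i} -/
def ee (i : Fin (ν + 2)) (a : Fin ν) : ℝ := if uidx a = i then 1 else 0

def F1c (c : Fin ν → Fin ν → Fin ν → ℝ) (i : Fin (ν + 2)) (p : Fin (ν + 2) → ℝ) : ℝ :=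
  -(∑ a, ∑ b, ∑ d, c a b d * ee i a * p (uidx b) * p (uidx d))

def F2c (c : Fin ν → Fin ν → Fin ν → ℝ) (i j : Fin (ν + 2)) (p : Fin (ν + 2) → ℝ) : ℝ :=
  -(2 * ∑ a, ∑ b, ∑ d, c a b d * ee i a * ee j b * p (uidx d))

def F3c (c : Fin ν → Fin ν → Fin ν → ℝ) (i j k : Fin (ν + 2)) : ℝ :=
  -(2 * ∑ a, ∑ b, ∑ d, c a b d * ee i a * ee j b * ee k d)

lemma sum3_swap12 (g : Fin ν → Fin ν → Fin ν → ℝ) :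
    ∑ a, ∑ b, ∑ d, g a b d = ∑ a, ∑ b, ∑ d, g b a d := Finset.sum_comm

lemma sum3_swap23 (g : Fin ν → Fin ν → Fin ν → ℝ) :
    ∑ a, ∑ b, ∑ d, g a b d = ∑ a, ∑ b, ∑ d, g a d b :=
  Finset.sum_congr rfl fun _ _ => Finset.sum_comm

lemma sum3_rot (g : Fin ν → Fin ν → Fin ν → ℝ) :
    ∑ a, ∑ b, ∑ d, g a b d = ∑ a, ∑ b, ∑ d, g b d a := by
  rw [sum3_swap23, sum3_swap12]

variable {c : Fin ν → Fin ν → Fin ν → ℝ}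
variable (hc1 : ∀ a b d : Fin ν, c a b d = c b a d) (hc2 : ∀ a b d : Fin ν, c a b d = c a d b)

include hc1 hc2 in
lemma c_rot (a b d : Fin ν) : c b d a = c a b d := by rw [hc2 b d a, hc1]

include hc1 hc2 in
lemma pdF0 {f : (Fin ν → ℝ) → ℝ}
    (hf : f = fun u => -((1 / 3) * ∑ a, ∑ b, ∑ d, c a b d * u a * u b * u d))
    (i : Fin (ν + 2)) (p : Fin (ν + 2) → ℝ) :
    pd (fun q => f (uC q)) i p = F1c c i p := by
  subst hf
  have hfun : (fun q : Fin (ν + 2) → ℝ =>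
      (fun u => -((1 / 3) * ∑ a, ∑ b, ∑ d, c a b d * u a * u b * u d)) (uC q))
      = fun q => -((1 / 3) * ∑ a, ∑ b, ∑ d, c a b d * q (uidx a) * q (uidx b) * q (uidx d)) := by
    funext q; simp [uC]
  rw [hfun, pd_neg, pd_const_mul]
  · rw [pd_sum _ _ _ _ (fun a _ => DifferentiableAt.fun_sum fun b _ =>
        DifferentiableAt.fun_sum fun d _ => diffAt_mono3 _ _ _ _ _)]
    have step : ∀ a : Fin ν, pd (fun q => ∑ b, ∑ d, c a b d * q (uidx a) * q (uidx b) * q (uidx d)) i p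
        = ∑ b, ∑ d, ((c a b d * p (uidx a) * p (uidx b)) * (if uidx d = i then 1 else 0)
          + p (uidx d) * ((c a b d * p (uidx a)) * (if uidx b = i then 1 else 0)
            + p (uidx b) * (c a b d * (if uidx a = i then 1 else 0)))) := by
      intro a
      rw [pd_sum _ _ _ _ (fun b _ => DifferentiableAt.fun_sum fun d _ => diffAt_mono3 _ _ _ _ _)]
      refine Finset.sum_congr rfl fun b _ => ?_
      rw [pd_sum _ _ _ _ (fun d _ => diffAt_mono3 _ _ _ _ _)]
      refine Finset.sum_congr rfl fun d _ => ?_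
      exact pd_mono3 (c a b d) (uidx a) (uidx b) (uidx d) i p
    simp only [step]
    have expand : (∑ a, ∑ b, ∑ d, ((c a b d * p (uidx a) * p (uidx b)) * (if uidx d = i then 1 else 0)
          + p (uidx d) * ((c a b d * p (uidx a)) * (if uidx b = i then 1 else 0)
            + p (uidx b) * (c a b d * (if uidx a = i then 1 else 0)))))
        = (∑ a, ∑ b, ∑ d, (c a b d * (if uidx a = i then 1 else 0) * p (uidx b) * p (uidx d)
          + c a b d * p (uidx a) * (if uidx b = i then 1 else 0) * p (uidx d)
          + c a b d * p (uidx a) * p (uidx b) * (if uidx d = i then 1 else 0))) := by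
      refine Finset.sum_congr rfl fun a _ => Finset.sum_congr rfl fun b _ =>
        Finset.sum_congr rfl fun d _ => ?_
      ring
    rw [expand]
    simp only [Finset.sum_add_distrib]
    have h2 : (∑ a, ∑ b, ∑ d, c a b d * p (uidx a) * (if uidx b = i then 1 else 0) * p (uidx d))
        = ∑ a, ∑ b, ∑ d, c a b d * (if uidx a = i then 1 else 0) * p (uidx b) * p (uidx d) := by
      rw [sum3_swap12 (fun a b d => c a b d * p (uidx a) * (if uidx b = i then 1 else 0) * p (uidx d))]
      refine Finset.sum_congr rfl fun a _ => Finset.sum_congr rfl fun b _ =>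
        Finset.sum_congr rfl fun d _ => ?_
      rw [hc1 b a d]; ring
    have h3 : (∑ a, ∑ b, ∑ d, c a b d * p (uidx a) * p (uidx b) * (if uidx d = i then 1 else 0))
        = ∑ a, ∑ b, ∑ d, c a b d * (if uidx a = i then 1 else 0) * p (uidx b) * p (uidx d) := by
      rw [sum3_rot (fun a b d => c a b d * p (uidx a) * p (uidx b) * (if uidx d = i then 1 else 0))]
      refine Finset.sum_congr rfl fun a _ => Finset.sum_congr rfl fun b _ =>
        Finset.sum_congr rfl fun d _ => ?_
      rw [c_rot hc1 hc2]; ring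
    rw [h2, h3]
    simp only [F1c, ee]
    ring
  · exact DifferentiableAt.fun_sum fun a _ => DifferentiableAt.fun_sum fun b _ =>
      DifferentiableAt.fun_sum fun d _ => diffAt_mono3 _ _ _ _ _

end Fdefs
end NRaux
namespace NRaux
section Fdefs2
variable {ν : ℕ} {c : Fin ν → Fin ν → Fin ν → ℝ}
variable (hc1 : ∀ a b d : Fin ν, c a b d = c b a d) (hc2 : ∀ a b d : Fin ν, c a b d = c a d b)

include hc2 in
lemma pdF1 (i j : Fin (ν + 2)) (p : Fin (ν + 2) → ℝ) :
    pd (fun q => F1c c i q) j p = F2c c i j p := by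
  simp only [F1c]
  rw [pd_neg, pd_sum _ _ _ _ (fun a _ => DifferentiableAt.fun_sum fun b _ =>
      DifferentiableAt.fun_sum fun d _ => diffAt_mono2 _ _ _ _)]
  have step : ∀ a : Fin ν, pd (fun q => ∑ b, ∑ d, c a b d * ee i a * q (uidx b) * q (uidx d)) j p
      = ∑ b, ∑ d, ((c a b d * ee i a * p (uidx b)) * (if uidx d = j then 1 else 0)
        + p (uidx d) * ((c a b d * ee i a) * (if uidx b = j then 1 else 0))) := by
    intro a
    rw [pd_sum _ _ _ _ (fun b _ => DifferentiableAt.fun_sum fun d _ => diffAt_mono2 _ _ _ _)]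
    refine Finset.sum_congr rfl fun b _ => ?_
    rw [pd_sum _ _ _ _ (fun d _ => diffAt_mono2 _ _ _ _)]
    exact Finset.sum_congr rfl fun d _ => pd_mono2 _ (uidx b) (uidx d) j p
  simp only [step]
  have expand : (∑ a, ∑ b, ∑ d, ((c a b d * ee i a * p (uidx b)) * (if uidx d = j then 1 else 0)
        + p (uidx d) * ((c a b d * ee i a) * (if uidx b = j then 1 else 0))))
      = (∑ a, ∑ b, ∑ d, (c a b d * ee i a * p (uidx b) * (if uidx d = j then 1 else 0)
        + c a b d * ee i a * (if uidx b = j then 1 else 0) * p (uidx d))) :=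
    Finset.sum_congr rfl fun a _ => Finset.sum_congr rfl fun b _ =>
      Finset.sum_congr rfl fun d _ => by ring
  rw [expand]
  simp only [Finset.sum_add_distrib]
  have h1 : (∑ a, ∑ b, ∑ d, c a b d * ee i a * p (uidx b) * (if uidx d = j then 1 else 0))
      = ∑ a, ∑ b, ∑ d, c a b d * ee i a * (if uidx b = j then 1 else 0) * p (uidx d) := by
    rw [sum3_swap23 (fun a b d => c a b d * ee i a * p (uidx b) * (if uidx d = j then 1 else 0))]
    refine Finset.sum_congr rfl fun a _ => Finset.sum_congr rfl fun b _ =>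
      Finset.sum_congr rfl fun d _ => ?_
    rw [hc2 a d b]; ring
  rw [h1]
  simp only [F2c, ee]
  ring

lemma pdF2 (i j k : Fin (ν + 2)) (p : Fin (ν + 2) → ℝ) :
    pd (fun q => F2c c i j q) k p = F3c c i j k := by
  simp only [F2c]
  rw [pd_neg, pd_const_mul _ _ _ _ (DifferentiableAt.fun_sum fun a _ => DifferentiableAt.fun_sum fun b _ =>
      DifferentiableAt.fun_sum fun d _ => diffAt_mono1 _ _ _)]
  rw [pd_sum _ _ _ _ (fun a _ => DifferentiableAt.fun_sum fun b _ =>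
      DifferentiableAt.fun_sum fun d _ => diffAt_mono1 _ _ _)]
  have step : ∀ a : Fin ν, pd (fun q => ∑ b, ∑ d, c a b d * ee i a * ee j b * q (uidx d)) k p
      = ∑ b, ∑ d, (c a b d * ee i a * ee j b) * (if uidx d = k then 1 else 0) := by
    intro a
    rw [pd_sum _ _ _ _ (fun b _ => DifferentiableAt.fun_sum fun d _ => diffAt_mono1 _ _ _)]
    refine Finset.sum_congr rfl fun b _ => ?_
    rw [pd_sum _ _ _ _ (fun d _ => diffAt_mono1 _ _ _)]
    exact Finset.sum_congr rfl fun d _ => pd_mono1 _ (uidx d) k p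
  simp only [step]
  simp only [F3c, ee]

include hc1 in
lemma F2c_symm (i j : Fin (ν + 2)) (p : Fin (ν + 2) → ℝ) : F2c c i j p = F2c c j i p := by
  simp only [F2c]
  congr 1
  congr 1
  rw [sum3_swap12 (fun a b d => c a b d * ee i a * ee j b * p (uidx d))]
  refine Finset.sum_congr rfl fun a _ => Finset.sum_congr rfl fun b _ =>
    Finset.sum_congr rfl fun d _ => ?_
  rw [hc1 b a d]; ring

include hc1 in
lemma F3c_symm12 (i j k : Fin (ν + 2)) : F3c c i j k = F3c c j i k := by
  simp only [F3c]
  congr 1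
  congr 1
  rw [sum3_swap12 (fun a b d => c a b d * ee i a * ee j b * ee k d)]
  refine Finset.sum_congr rfl fun a _ => Finset.sum_congr rfl fun b _ =>
    Finset.sum_congr rfl fun d _ => ?_
  rw [hc1 b a d]; ring

include hc2 in
lemma F3c_symm23 (i j k : Fin (ν + 2)) : F3c c i j k = F3c c i k j := by
  simp only [F3c]
  congr 1
  congr 1
  rw [sum3_swap23 (fun a b d => c a b d * ee i a * ee j b * ee k d)]
  refine Finset.sum_congr rfl fun a _ => Finset.sum_congr rfl fun b _ =>
    Finset.sum_congr rfl fun d _ => ?_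
  rw [hc2 a d b]; ring

lemma ee_eq_zero {i : Fin (ν + 2)} (h : i.1 = 0 ∨ i.1 = ν + 1) (a : Fin ν) : ee i a = 0 := by
  have ha := a.2
  rw [ee, if_neg]
  intro hq
  have : (uidx a).1 = i.1 := congrArg Fin.val hq
  simp only [uidx] at this
  rcases h with h | h <;> omega

lemma F1c_zero {i : Fin (ν + 2)} (h : i.1 = 0 ∨ i.1 = ν + 1) (p : Fin (ν + 2) → ℝ) :
    F1c c i p = 0 := by simp [F1c, ee_eq_zero h]

lemma F2c_zero_left {i : Fin (ν + 2)} (h : i.1 = 0 ∨ i.1 = ν + 1) (j : Fin (ν + 2))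
    (p : Fin (ν + 2) → ℝ) : F2c c i j p = 0 := by simp [F2c, ee_eq_zero h]

lemma F2c_zero_right {j : Fin (ν + 2)} (h : j.1 = 0 ∨ j.1 = ν + 1) (i : Fin (ν + 2))
    (p : Fin (ν + 2) → ℝ) : F2c c i j p = 0 := by simp [F2c, ee_eq_zero h]

end Fdefs2
end NRaux
namespace NRaux
section Met
variable {ν : ℕ}

def d0 (i : Fin (ν + 2)) : ℝ := if i.1 = 0 then 1 else 0
def dL (i : Fin (ν + 2)) : ℝ := if i.1 = ν + 1 then 1 else 0

def ginvM (f : (Fin ν → ℝ) → ℝ) (Ξ : Matrix (Fin ν) (Fin ν) ℝ) (p : Fin (ν + 2) → ℝ) :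
    Matrix (Fin (ν + 2)) (Fin (ν + 2)) ℝ := fun i j =>
  if (i.1 = 0 ∧ j.1 = ν + 1) ∨ (i.1 = ν + 1 ∧ j.1 = 0) then 1
  else if i.1 = ν + 1 ∧ j.1 = ν + 1 then -(f (uC p))
  else if h : 1 ≤ i.1 ∧ i.1 ≤ ν ∧ 1 ≤ j.1 ∧ j.1 ≤ ν then
    Ξ⁻¹ ⟨i.1 - 1, by omega⟩ ⟨j.1 - 1, by omega⟩
  else 0

lemma uidx_val (a : Fin ν) : (uidx a).1 = a.1 + 1 := rfl
lemma zero_val : ((0 : Fin (ν + 2))).1 = 0 := rfl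
lemma last_val : (Fin.last (ν + 1)).1 = ν + 1 := rfl

lemma tri (i : Fin (ν + 2)) : i = 0 ∨ i = Fin.last (ν + 1) ∨ ∃ a : Fin ν, i = uidx a := by
  have hi := i.2
  rcases Nat.eq_zero_or_pos i.1 with h | h
  · exact Or.inl (Fin.ext h)
  · by_cases h2 : i.1 = ν + 1
    · exact Or.inr (Or.inl (Fin.ext h2))
    · exact Or.inr (Or.inr ⟨⟨i.1 - 1, by omega⟩, Fin.ext (by simp [uidx_val] <;> omega)⟩)

lemma sum_split (h : Fin (ν + 2) → ℝ) :
    ∑ l, h l = h 0 + (∑ a : Fin ν, h (uidx a)) + h (Fin.last (ν + 1)) := by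
  rw [Fin.sum_univ_succ, Fin.sum_univ_castSucc]
  have h1 : ∀ a : Fin ν, (a.castSucc).succ = uidx a := fun a => by
    apply Fin.ext; simp [uidx_val]
  have h2 : (Fin.last ν).succ = Fin.last (ν + 1) := by apply Fin.ext; simp
  simp only [h1, h2]; ring

variable (f : (Fin ν → ℝ) → ℝ) (Ξ : Matrix (Fin ν) (Fin ν) ℝ) (p : Fin (ν + 2) → ℝ)

lemma g00 : gmet f Ξ p 0 0 = f (uC p) := by rw [gmet, if_pos ⟨rfl, rfl⟩]
lemma g0u (a : Fin ν) : gmet f Ξ p 0 (uidx a) = 0 := by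
  have ha := a.2
  rw [gmet, if_neg (by simp [uidx_val] <;> omega), if_neg (by simp [uidx_val, zero_val] <;> omega),
    dif_neg (by simp [zero_val])]
lemma gu0 (a : Fin ν) : gmet f Ξ p (uidx a) 0 = 0 := by
  have ha := a.2
  rw [gmet, if_neg (by simp [uidx_val] <;> omega), if_neg (by simp [uidx_val, zero_val] <;> omega),
    dif_neg (by simp [zero_val])]
lemma g0L : gmet f Ξ p 0 (Fin.last (ν + 1)) = 1 := by
  rw [gmet, if_neg (by simp [last_val]), if_pos (Or.inl ⟨rfl, rfl⟩)]
lemma gL0 : gmet f Ξ p (Fin.last (ν + 1)) 0 = 1 := by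
  rw [gmet, if_neg (by simp [last_val]), if_pos (Or.inr ⟨rfl, rfl⟩)]
lemma guu (a b : Fin ν) : gmet f Ξ p (uidx a) (uidx b) = Ξ a b := by
  have ha := a.2; have hb := b.2
  rw [gmet, if_neg (by simp [uidx_val]), if_neg (by simp [uidx_val] <;> omega),
    dif_pos (by simp [uidx_val] <;> omega)]
  congr 1 <;> apply Fin.ext <;> simp [uidx_val]
lemma guL (a : Fin ν) : gmet f Ξ p (uidx a) (Fin.last (ν + 1)) = 0 := by
  have ha := a.2
  rw [gmet, if_neg (by simp [uidx_val, last_val] <;> omega),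
    if_neg (by simp [uidx_val, last_val] <;> omega), dif_neg (by simp [last_val] <;> omega)]
lemma gLu (a : Fin ν) : gmet f Ξ p (Fin.last (ν + 1)) (uidx a) = 0 := by
  have ha := a.2
  rw [gmet, if_neg (by simp [uidx_val, last_val] <;> omega),
    if_neg (by simp [uidx_val, last_val] <;> omega), dif_neg (by simp [last_val] <;> omega)]
lemma gLL : gmet f Ξ p (Fin.last (ν + 1)) (Fin.last (ν + 1)) = 0 := by
  rw [gmet, if_neg (by simp [last_val]), if_neg (by simp [last_val]),
    dif_neg (by simp [last_val] <;> omega)]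

lemma i00 : ginvM f Ξ p 0 0 = 0 := by
  rw [ginvM, if_neg (by simp [zero_val]), if_neg (by simp [zero_val]),
    dif_neg (by simp [zero_val])]
lemma i0u (a : Fin ν) : ginvM f Ξ p 0 (uidx a) = 0 := by
  have ha := a.2
  rw [ginvM, if_neg (by simp [uidx_val, zero_val] <;> omega), if_neg (by simp [zero_val]),
    dif_neg (by simp [zero_val])]
lemma iu0 (a : Fin ν) : ginvM f Ξ p (uidx a) 0 = 0 := by
  have ha := a.2
  rw [ginvM, if_neg (by simp [uidx_val, zero_val] <;> omega),
    if_neg (by simp [uidx_val] <;> omega), dif_neg (by simp [zero_val])]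
lemma i0L : ginvM f Ξ p 0 (Fin.last (ν + 1)) = 1 := by
  rw [ginvM, if_pos (Or.inl ⟨rfl, rfl⟩)]
lemma iL0 : ginvM f Ξ p (Fin.last (ν + 1)) 0 = 1 := by
  rw [ginvM, if_pos (Or.inr ⟨rfl, rfl⟩)]
lemma iuu (a b : Fin ν) : ginvM f Ξ p (uidx a) (uidx b) = Ξ⁻¹ a b := by
  have ha := a.2; have hb := b.2
  rw [ginvM, if_neg (by simp [uidx_val] <;> omega), if_neg (by simp [uidx_val] <;> omega),
    dif_pos (by simp [uidx_val] <;> omega)]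
  congr 1 <;> apply Fin.ext <;> simp [uidx_val]
lemma iuL (a : Fin ν) : ginvM f Ξ p (uidx a) (Fin.last (ν + 1)) = 0 := by
  have ha := a.2
  rw [ginvM, if_neg (by simp [uidx_val, last_val] <;> omega),
    if_neg (by simp [uidx_val] <;> omega), dif_neg (by simp [last_val] <;> omega)]
lemma iLu (a : Fin ν) : ginvM f Ξ p (Fin.last (ν + 1)) (uidx a) = 0 := by
  have ha := a.2
  rw [ginvM, if_neg (by simp [uidx_val, last_val] <;> omega),
    if_neg (by simp [uidx_val, last_val] <;> omega), dif_neg (by simp [last_val] <;> omega)]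
lemma iLL : ginvM f Ξ p (Fin.last (ν + 1)) (Fin.last (ν + 1)) = -(f (uC p)) := by
  rw [ginvM, if_neg (by simp [last_val]), if_pos ⟨rfl, rfl⟩]

lemma uidx_ne_zero (a : Fin ν) : uidx a ≠ 0 := by
  intro h; have := congrArg Fin.val h; simp [uidx_val, zero_val] at this
lemma uidx_ne_last (a : Fin ν) : uidx a ≠ Fin.last (ν + 1) := by
  have ha := a.2
  intro h; have := congrArg Fin.val h; simp [uidx_val, last_val] at this; omega
lemma zero_ne_last : (0 : Fin (ν + 2)) ≠ Fin.last (ν + 1) := by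
  intro h; have := congrArg Fin.val h; simp [zero_val, last_val] at this
lemma uidx_inj {a b : Fin ν} (h : uidx a = uidx b) : a = b := by
  have := congrArg Fin.val h; simp [uidx_val] at this; exact Fin.ext this

lemma gmul (hΞinv : IsUnit Ξ.det) : gmet f Ξ p * ginvM f Ξ p = 1 := by
  ext i j
  rw [Matrix.mul_apply, sum_split]
  rcases tri i with rfl | rfl | ⟨a, rfl⟩ <;> rcases tri j with rfl | rfl | ⟨b, rfl⟩
  · simp [g00, g0u, g0L, i00, iu0, iL0, Matrix.one_apply]
  · simp [g00, g0u, g0L, i0L, iuL, iLL, Matrix.one_apply_ne zero_ne_last]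
    try ring
  · simp [g00, g0u, g0L, i0u, iuu, iLu, Matrix.one_apply_ne (Ne.symm (uidx_ne_zero b))]
  · simp [gL0, gLu, gLL, i00, iu0, iL0, Matrix.one_apply_ne (Ne.symm zero_ne_last)]
  · simp [gL0, gLu, gLL, i0L, iuL, iLL, Matrix.one_apply]
  · simp [gL0, gLu, gLL, i0u, iuu, iLu, Matrix.one_apply_ne (Ne.symm (uidx_ne_last b))]
  · simp [gu0, guu, guL, i00, iu0, iL0, Matrix.one_apply_ne (uidx_ne_zero a)]
  · simp [gu0, guu, guL, i0L, iuL, iLL, Matrix.one_apply_ne (uidx_ne_last a)]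
  · have key : (∑ x : Fin ν, Ξ a x * Ξ⁻¹ x b) = (Ξ * Ξ⁻¹) a b := (Matrix.mul_apply).symm
    simp only [gu0, guu, guL, i0u, iuu, iLu]
    rw [Matrix.one_apply]
    simp only [zero_mul, mul_zero, add_zero, zero_add, key, Matrix.mul_nonsing_inv Ξ hΞinv,
      Matrix.one_apply]
    by_cases hab : a = b
    · subst hab; simp
    · rw [if_neg hab, if_neg (fun h => hab (uidx_inj h))]

lemma ginv_eq (hΞinv : IsUnit Ξ.det) : (gmet f Ξ p)⁻¹ = ginvM f Ξ p :=
  Matrix.inv_eq_right_inv (gmul f Ξ p hΞinv)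

end Met
end NRaux
namespace NRaux
section Gam
variable {ν : ℕ} {c : Fin ν → Fin ν → Fin ν → ℝ} {f : (Fin ν → ℝ) → ℝ}
  {Ξ : Matrix (Fin ν) (Fin ν) ℝ}
variable (hc1 : ∀ a b d : Fin ν, c a b d = c b a d) (hc2 : ∀ a b d : Fin ν, c a b d = c a d b)
  (hf : f = fun u => -((1 / 3) * ∑ a, ∑ b, ∑ d, c a b d * u a * u b * u d))
  (hΞinv : IsUnit Ξ.det)

lemma d0_zero : d0 (0 : Fin (ν + 2)) = 1 := by simp [d0, zero_val]
lemma d0_uidx (a : Fin ν) : d0 (uidx a) = 0 := by simp [d0, uidx_val]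
lemma d0_last : d0 (Fin.last (ν + 1)) = 0 := by simp [d0, last_val]
lemma dL_zero : dL (0 : Fin (ν + 2)) = 0 := by simp [dL, zero_val]
lemma dL_uidx (a : Fin ν) : dL (uidx a) = 0 := by
  have := a.2; simp [dL, uidx_val]; omega
lemma dL_last : dL (Fin.last (ν + 1)) = 1 := by simp [dL, last_val]

include hc1 hc2 hf in
lemma pd_gmet (i j k : Fin (ν + 2)) (p : Fin (ν + 2) → ℝ) :
    pd (fun q => gmet f Ξ q j k) i p = d0 j * d0 k * F1c c i p := by
  by_cases h : j.1 = 0 ∧ k.1 = 0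
  · have hfun : (fun q => gmet f Ξ q j k) = fun q => f (uC q) := by
      funext q; simp only [gmet]; rw [if_pos h]
    rw [hfun, pdF0 hc1 hc2 hf]
    simp [d0, h.1, h.2]
  · have hfun : (fun q => gmet f Ξ q j k) = fun _ => gmet f Ξ p j k := by
      funext q; simp only [gmet]; rw [if_neg h, if_neg h]
    rw [hfun, pd_const]
    have : d0 j * d0 k = 0 := by
      by_cases hj : j.1 = 0 <;> by_cases hk : k.1 = 0 <;> simp [d0, hj, hk] <;> exact h ⟨hj, hk⟩
    rw [this]; ring

include hc1 hc2 hf in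
lemma Γ₁_eq (p : Fin (ν + 2) → ℝ) (i j k : Fin (ν + 2)) :
    Γ₁ f Ξ p i j k = (1 / 2) * (d0 j * d0 k * F1c c i p + d0 i * d0 k * F1c c j p
      - d0 i * d0 j * F1c c k p) := by
  rw [Γ₁, pd_gmet hc1 hc2 hf, pd_gmet hc1 hc2 hf, pd_gmet hc1 hc2 hf]

def Wf (f : (Fin ν → ℝ) → ℝ) (Ξ : Matrix (Fin ν) (Fin ν) ℝ) (c : Fin ν → Fin ν → Fin ν → ℝ)
    (p : Fin (ν + 2) → ℝ) (k : Fin (ν + 2)) : ℝ :=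
  ∑ l, ginvM f Ξ p k l * F1c c l p

lemma ginv_col0 (p : Fin (ν + 2) → ℝ) (k : Fin (ν + 2)) : ginvM f Ξ p k 0 = dL k := by
  rcases tri k with rfl | rfl | ⟨a, rfl⟩
  · rw [i00, dL_zero]
  · rw [iL0, dL_last]
  · rw [iu0, dL_uidx]

lemma sum_ginv_d0 (p : Fin (ν + 2) → ℝ) (k : Fin (ν + 2)) :
    ∑ l, ginvM f Ξ p k l * d0 l = dL k := by
  rw [sum_split]
  simp only [d0_zero, d0_uidx, d0_last, mul_zero, mul_one, Finset.sum_const_zero]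
  rw [ginv_col0]; ring

include hc1 hc2 hf hΞinv in
lemma Γ₂_eq (p : Fin (ν + 2) → ℝ) (i j k : Fin (ν + 2)) :
    Γ₂ f Ξ p i j k = (1 / 2) * (dL k * (d0 j * F1c c i p + d0 i * F1c c j p))
      - (1 / 2) * (d0 i * d0 j) * Wf f Ξ c p k := by
  rw [Γ₂]
  simp only [ginv_eq f Ξ p hΞinv, Γ₁_eq hc1 hc2 hf]
  have hterm : ∀ l, ginvM f Ξ p k l * ((1 / 2) * (d0 j * d0 l * F1c c i p
        + d0 i * d0 l * F1c c j p - d0 i * d0 j * F1c c l p))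
      = ((1 / 2) * (d0 j * F1c c i p)) * (ginvM f Ξ p k l * d0 l)
        + ((1 / 2) * (d0 i * F1c c j p)) * (ginvM f Ξ p k l * d0 l)
        - ((1 / 2) * (d0 i * d0 j)) * (ginvM f Ξ p k l * F1c c l p) := fun l => by ring
  simp only [hterm]
  rw [Finset.sum_sub_distrib, Finset.sum_add_distrib, ← Finset.mul_sum, ← Finset.mul_sum,
    ← Finset.mul_sum, sum_ginv_d0]
  rw [show (∑ l, ginvM f Ξ p k l * F1c c l p) = Wf f Ξ c p k from rfl]
  ring

end Gam
end NRaux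
namespace NRaux
section RcSec
variable {ν : ℕ} {c : Fin ν → Fin ν → Fin ν → ℝ} {f : (Fin ν → ℝ) → ℝ}
  {Ξ : Matrix (Fin ν) (Fin ν) ℝ}
variable (hc1 : ∀ a b d : Fin ν, c a b d = c b a d) (hc2 : ∀ a b d : Fin ν, c a b d = c a d b)
  (hf : f = fun u => -((1 / 3) * ∑ a, ∑ b, ∑ d, c a b d * u a * u b * u d))
  (hΞinv : IsUnit Ξ.det)

lemma diffAt_F1c (m : Fin (ν + 2)) (p : Fin (ν + 2) → ℝ) :
    DifferentiableAt ℝ (fun q => F1c c m q) p := by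
  simp only [F1c]
  exact (DifferentiableAt.fun_sum fun a _ => DifferentiableAt.fun_sum fun b _ =>
    DifferentiableAt.fun_sum fun d _ => diffAt_mono2 _ _ _ _).neg

lemma diffAt_F2c (m m' : Fin (ν + 2)) (p : Fin (ν + 2) → ℝ) :
    DifferentiableAt ℝ (fun q => F2c c m m' q) p := by
  simp only [F2c]
  exact ((DifferentiableAt.fun_sum fun a _ => DifferentiableAt.fun_sum fun b _ =>
    DifferentiableAt.fun_sum fun d _ => diffAt_mono1 _ _ _).const_mul 2).neg

lemma pd_comb3 {n : ℕ} (A B C : ℝ) (g1 g2 g3 : (Fin n → ℝ) → ℝ) (i : Fin n) (p : Fin n → ℝ)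
    (H1 : DifferentiableAt ℝ g1 p) (H2 : DifferentiableAt ℝ g2 p)
    (H3 : DifferentiableAt ℝ g3 p) :
    pd (fun q => (1 / 2) * (A * g1 q + B * g2 q - C * g3 q)) i p
      = (1 / 2) * (A * pd g1 i p + B * pd g2 i p - C * pd g3 i p) := by
  unfold pd
  have H := (((H1.hasFDerivAt.const_mul A).add (H2.hasFDerivAt.const_mul B)).sub
    (H3.hasFDerivAt.const_mul C)).const_mul ((1:ℝ)/2)
  rw [(show
    fderiv ℝ (fun q => (1 / 2) * (A * g1 q + B * g2 q - C * g3 q)) p = _ from H.fderiv)]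
  simp

lemma pd_comb4 {n : ℕ} (A B C D : ℝ) (g1 g2 g3 g4 : (Fin n → ℝ) → ℝ) (i : Fin n) (p : Fin n → ℝ)
    (H1 : DifferentiableAt ℝ g1 p) (H2 : DifferentiableAt ℝ g2 p)
    (H3 : DifferentiableAt ℝ g3 p) (H4 : DifferentiableAt ℝ g4 p) :
    pd (fun q => (1 / 2) * (A * g1 q - B * g2 q - C * g3 q + D * g4 q)) i p
      = (1 / 2) * (A * pd g1 i p - B * pd g2 i p - C * pd g3 i p + D * pd g4 i p) := by
  unfold pd
  have H := ((((H1.hasFDerivAt.const_mul A).sub (H2.hasFDerivAt.const_mul B)).sub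
    (H3.hasFDerivAt.const_mul C)).add (H4.hasFDerivAt.const_mul D)).const_mul ((1:ℝ)/2)
  rw [(show
    fderiv ℝ (fun q => (1 / 2) * (A * g1 q - B * g2 q - C * g3 q + D * g4 q)) p = _ from H.fderiv)]
  simp
  ring

lemma sum_d0_dL : ∑ m : Fin (ν + 2), d0 m * dL m = 0 := by
  rw [sum_split]
  simp [d0_zero, d0_uidx, d0_last, dL_zero, dL_uidx, dL_last]

lemma sum_dL_F1 (p : Fin (ν + 2) → ℝ) : ∑ m : Fin (ν + 2), dL m * F1c c m p = 0 := by
  rw [sum_split]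
  simp only [dL_zero, dL_uidx, dL_last, zero_mul, one_mul, Finset.sum_const_zero]
  rw [F1c_zero (Or.inr rfl)]
  ring

lemma Wf0 (p : Fin (ν + 2) → ℝ) : Wf f Ξ c p 0 = 0 := by
  rw [Wf, sum_split]
  simp only [i00, i0u, i0L, zero_mul, one_mul, Finset.sum_const_zero]
  rw [F1c_zero (Or.inr rfl)]
  ring

lemma sum_d0_W (p : Fin (ν + 2) → ℝ) : ∑ m : Fin (ν + 2), d0 m * Wf f Ξ c p m = 0 := by
  rw [sum_split]
  simp only [d0_zero, d0_uidx, d0_last, zero_mul, one_mul, Finset.sum_const_zero]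
  rw [Wf0]
  ring

include hc1 hc2 hf hΞinv in
lemma sumΓΓ (p : Fin (ν + 2) → ℝ) (i j k l : Fin (ν + 2)) :
    ∑ m : Fin (ν + 2), Γ₁ f Ξ p i m l * Γ₂ f Ξ p j k m
      = -(1 / 4) * (d0 i * d0 l) * (d0 j * d0 k)
          * (∑ m : Fin (ν + 2), F1c c m p * Wf f Ξ c p m) := by
  have hterm : ∀ m : Fin (ν + 2), Γ₁ f Ξ p i m l * Γ₂ f Ξ p j k m
      = ((1 / 4) * (d0 l * F1c c i p - d0 i * F1c c l p)
          * (d0 k * F1c c j p + d0 j * F1c c k p)) * (d0 m * dL m)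
        + ((1 / 4) * (d0 i * d0 l) * (d0 k * F1c c j p + d0 j * F1c c k p))
            * (dL m * F1c c m p)
        + (-(1 / 4) * (d0 l * F1c c i p - d0 i * F1c c l p) * (d0 j * d0 k))
            * (d0 m * Wf f Ξ c p m)
        + (-(1 / 4) * (d0 i * d0 l) * (d0 j * d0 k)) * (F1c c m p * Wf f Ξ c p m) := by
    intro m
    rw [Γ₁_eq hc1 hc2 hf, Γ₂_eq hc1 hc2 hf hΞinv]
    ring
  simp only [hterm]
  rw [Finset.sum_add_distrib, Finset.sum_add_distrib, Finset.sum_add_distrib,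
    ← Finset.mul_sum, ← Finset.mul_sum, ← Finset.mul_sum, ← Finset.mul_sum,
    sum_d0_dL, sum_dL_F1, sum_d0_W]
  ring

include hc1 hc2 hf hΞinv in
lemma Rc_eq (p : Fin (ν + 2) → ℝ) (i j k l : Fin (ν + 2)) :
    Rc f Ξ p i j k l = (1 / 2) * (d0 j * d0 l * F2c c k i p - d0 j * d0 k * F2c c l i p
      - d0 i * d0 l * F2c c k j p + d0 i * d0 k * F2c c l j p) := by
  rw [Rc, Finset.sum_sub_distrib, sumΓΓ hc1 hc2 hf hΞinv p i j k l,
    sumΓΓ hc1 hc2 hf hΞinv p j i k l]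
  have h1 : (fun q => Γ₁ f Ξ q j k l)
      = fun q => (1 / 2) * ((d0 k * d0 l) * F1c c j q + (d0 j * d0 l) * F1c c k q
          - (d0 j * d0 k) * F1c c l q) := funext fun q => Γ₁_eq hc1 hc2 hf q j k l
  have h2 : (fun q => Γ₁ f Ξ q i k l)
      = fun q => (1 / 2) * ((d0 k * d0 l) * F1c c i q + (d0 i * d0 l) * F1c c k q
          - (d0 i * d0 k) * F1c c l q) := funext fun q => Γ₁_eq hc1 hc2 hf q i k l
  rw [h1, h2, pd_comb3 _ _ _ _ _ _ _ _ (diffAt_F1c j p) (diffAt_F1c k p) (diffAt_F1c l p),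
    pd_comb3 _ _ _ _ _ _ _ _ (diffAt_F1c i p) (diffAt_F1c k p) (diffAt_F1c l p)]
  rw [pdF1 hc2 j i p, pdF1 hc2 k i p, pdF1 hc2 l i p, pdF1 hc2 i j p, pdF1 hc2 k j p,
    pdF1 hc2 l j p]
  rw [F2c_symm hc1 j i p]
  ring

end RcSec
end NRaux
namespace NRaux
section Main
variable {ν : ℕ} {c : Fin ν → Fin ν → Fin ν → ℝ} {f : (Fin ν → ℝ) → ℝ}
  {Ξ : Matrix (Fin ν) (Fin ν) ℝ}
variable (hc1 : ∀ a b d : Fin ν, c a b d = c b a d) (hc2 : ∀ a b d : Fin ν, c a b d = c a d b)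
  (hf : f = fun u => -((1 / 3) * ∑ a, ∑ b, ∑ d, c a b d * u a * u b * u d))
  (hΞinv : IsUnit Ξ.det)

include hc1 hc2 hf hΞinv in
lemma Γ₂_m0 (p : Fin (ν + 2) → ℝ) (i j : Fin (ν + 2)) : Γ₂ f Ξ p i j 0 = 0 := by
  rw [Γ₂_eq hc1 hc2 hf hΞinv, dL_zero, Wf0]; ring

include hc1 hc2 hf hΞinv in
lemma Γ₂_mu (p : Fin (ν + 2) → ℝ) (i j : Fin (ν + 2)) (a : Fin ν) :
    Γ₂ f Ξ p i j (uidx a) = -(1 / 2) * (d0 i * d0 j) * Wf f Ξ c p (uidx a) := by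
  rw [Γ₂_eq hc1 hc2 hf hΞinv, dL_uidx]; ring

include hc1 hc2 hf hΞinv in
lemma Rc_u1 (p : Fin (ν + 2) → ℝ) (j k l : Fin (ν + 2)) (a : Fin ν) :
    Rc f Ξ p (uidx a) j k l
      = (1 / 2) * (d0 j * d0 l * F2c c k (uidx a) p - d0 j * d0 k * F2c c l (uidx a) p) := by
  rw [Rc_eq hc1 hc2 hf hΞinv, d0_uidx]; ring

include hc1 hc2 hf hΞinv in
lemma Rc_u2 (p : Fin (ν + 2) → ℝ) (i k l : Fin (ν + 2)) (a : Fin ν) :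
    Rc f Ξ p i (uidx a) k l
      = (1 / 2) * (-(d0 i * d0 l) * F2c c k (uidx a) p + (d0 i * d0 k) * F2c c l (uidx a) p) := by
  rw [Rc_eq hc1 hc2 hf hΞinv, d0_uidx]; ring

include hc1 hc2 hf hΞinv in
lemma Rc_u3 (p : Fin (ν + 2) → ℝ) (i j l : Fin (ν + 2)) (a : Fin ν) :
    Rc f Ξ p i j (uidx a) l
      = (1 / 2) * (d0 j * d0 l * F2c c (uidx a) i p - d0 i * d0 l * F2c c (uidx a) j p) := by
  rw [Rc_eq hc1 hc2 hf hΞinv, d0_uidx]; ring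

include hc1 hc2 hf hΞinv in
lemma Rc_u4 (p : Fin (ν + 2) → ℝ) (i j k : Fin (ν + 2)) (a : Fin ν) :
    Rc f Ξ p i j k (uidx a)
      = (1 / 2) * (-(d0 j * d0 k) * F2c c (uidx a) i p + d0 i * d0 k * F2c c (uidx a) j p) := by
  rw [Rc_eq hc1 hc2 hf hΞinv, d0_uidx]; ring

include hc1 hc2 hf hΞinv in
lemma Rc_L1 (p : Fin (ν + 2) → ℝ) (j k l : Fin (ν + 2)) :
    Rc f Ξ p (Fin.last (ν + 1)) j k l = 0 := by
  rw [Rc_eq hc1 hc2 hf hΞinv, d0_last, F2c_zero_right (j := Fin.last (ν + 1)) (Or.inr rfl) k p,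
    F2c_zero_right (j := Fin.last (ν + 1)) (Or.inr rfl) l p]; ring

include hc1 hc2 hf hΞinv in
lemma Rc_L2 (p : Fin (ν + 2) → ℝ) (i k l : Fin (ν + 2)) :
    Rc f Ξ p i (Fin.last (ν + 1)) k l = 0 := by
  rw [Rc_eq hc1 hc2 hf hΞinv, d0_last, F2c_zero_right (j := Fin.last (ν + 1)) (Or.inr rfl) k p,
    F2c_zero_right (j := Fin.last (ν + 1)) (Or.inr rfl) l p]; ring

include hc1 hc2 hf hΞinv in
lemma Rc_L3 (p : Fin (ν + 2) → ℝ) (i j l : Fin (ν + 2)) :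
    Rc f Ξ p i j (Fin.last (ν + 1)) l = 0 := by
  rw [Rc_eq hc1 hc2 hf hΞinv, d0_last, F2c_zero_left (i := Fin.last (ν + 1)) (Or.inr rfl) i p,
    F2c_zero_left (i := Fin.last (ν + 1)) (Or.inr rfl) j p]; ring

include hc1 hc2 hf hΞinv in
lemma Rc_L4 (p : Fin (ν + 2) → ℝ) (i j k : Fin (ν + 2)) :
    Rc f Ξ p i j k (Fin.last (ν + 1)) = 0 := by
  rw [Rc_eq hc1 hc2 hf hΞinv, d0_last, F2c_zero_left (i := Fin.last (ν + 1)) (Or.inr rfl) i p,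
    F2c_zero_left (i := Fin.last (ν + 1)) (Or.inr rfl) j p]; ring

include hc1 hc2 hf hΞinv in
lemma corr (p : Fin (ν + 2) → ℝ) (i j k l n : Fin (ν + 2)) :
    ∑ m, (Γ₂ f Ξ p n i m * Rc f Ξ p m j k l + Γ₂ f Ξ p n j m * Rc f Ξ p i m k l
      + Γ₂ f Ξ p n k m * Rc f Ξ p i j m l + Γ₂ f Ξ p n l m * Rc f Ξ p i j k m) = 0 := by
  rw [sum_split]
  rw [Γ₂_m0 hc1 hc2 hf hΞinv, Γ₂_m0 hc1 hc2 hf hΞinv, Γ₂_m0 hc1 hc2 hf hΞinv,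
    Γ₂_m0 hc1 hc2 hf hΞinv]
  rw [Rc_L1 hc1 hc2 hf hΞinv, Rc_L2 hc1 hc2 hf hΞinv, Rc_L3 hc1 hc2 hf hΞinv,
    Rc_L4 hc1 hc2 hf hΞinv]
  have hA : ∀ a : Fin ν, (Γ₂ f Ξ p n i (uidx a) * Rc f Ξ p (uidx a) j k l
      + Γ₂ f Ξ p n j (uidx a) * Rc f Ξ p i (uidx a) k l
      + Γ₂ f Ξ p n k (uidx a) * Rc f Ξ p i j (uidx a) l
      + Γ₂ f Ξ p n l (uidx a) * Rc f Ξ p i j k (uidx a)) = 0 := by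
    intro a
    rw [Γ₂_mu hc1 hc2 hf hΞinv, Γ₂_mu hc1 hc2 hf hΞinv, Γ₂_mu hc1 hc2 hf hΞinv,
      Γ₂_mu hc1 hc2 hf hΞinv, Rc_u1 hc1 hc2 hf hΞinv, Rc_u2 hc1 hc2 hf hΞinv,
      Rc_u3 hc1 hc2 hf hΞinv, Rc_u4 hc1 hc2 hf hΞinv]
    ring
  rw [Finset.sum_congr rfl (fun a _ => hA a), Finset.sum_const_zero]
  ring

include hc1 hc2 hf in
lemma S_chain (p : Fin (ν + 2) → ℝ) (x y z : Fin (ν + 2)) :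
    pd (fun q => pd (fun r => pd (fun w => f (uC w)) z r) y q) x p = F3c c z y x := by
  have h1 : ∀ r : Fin (ν + 2) → ℝ, pd (fun w => f (uC w)) z r = F1c c z r :=
    fun r => pdF0 hc1 hc2 hf z r
  simp only [h1]
  have h2 : ∀ q : Fin (ν + 2) → ℝ, pd (fun r => F1c c z r) y q = F2c c z y q :=
    fun q => pdF1 hc2 z y q
  simp only [h2]
  exact pdF2 z y x p

include hc1 hc2 in
lemma F3c_rot (x y z : Fin (ν + 2)) : F3c c x y z = F3c c z x y := by
  rw [F3c_symm23 hc2 x y z, F3c_symm12 hc1 x z y]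

lemma ite_d0 (i j : Fin (ν + 2)) :
    (if i = 0 ∧ j = 0 then (1:ℝ) else 0) = d0 i * d0 j := by
  by_cases hi : i.1 = 0 <;> by_cases hj : j.1 = 0 <;>
    simp [d0, Fin.ext_iff, hi, hj]

end Main
end NRaux

/-- for the cubic function `f(u) = -(1/3) Σ c_{abc} u_a u_b u_c`, the covariant
derivative curvature tensor of `g_f` is `∇R_{L,S}` for `L(e_i,e_j) = δ_{0i} δ_{0j}` and
`S(e_i,e_j,e_k) = -(1/2) ∂_i ∂_j ∂_k f`. -/
theorem nabla_R_is_nabla_R_LS (ν : ℕ) (hν : 1 ≤ ν)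
    (c : Fin ν → Fin ν → Fin ν → ℝ)
    (hc1 : ∀ a b d : Fin ν, c a b d = c b a d)
    (hc2 : ∀ a b d : Fin ν, c a b d = c a d b)
    (f : (Fin ν → ℝ) → ℝ)
    (hf : f = fun u => -((1 / 3) * ∑ a, ∑ b, ∑ d, c a b d * u a * u b * u d))
    (Ξ : Matrix (Fin ν) (Fin ν) ℝ) (hΞsym : Ξ.IsSymm) (hΞinv : IsUnit Ξ.det)
    (L : Fin (ν + 2) → Fin (ν + 2) → ℝ)
    (hL : ∀ i j : Fin (ν + 2), L i j = if i = 0 ∧ j = 0 then 1 else 0)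
    (S : (Fin (ν + 2) → ℝ) → Fin (ν + 2) → Fin (ν + 2) → Fin (ν + 2) → ℝ)
    (hS : ∀ (p : Fin (ν + 2) → ℝ) (i j k : Fin (ν + 2)),
      S p i j k =
        -((1 / 2) * pd (fun q => pd (fun r => pd (fun w => f (uC w)) k r) j q) i p)) :
    ∀ (p : Fin (ν + 2) → ℝ) (i j k l n : Fin (ν + 2)),
      RcD f Ξ p i j k l n =
        S p i l n * L j k + L i l * S p j k n - S p i k n * L j l - L i k * S p j l n := by
  intro p i j k l n
  open NRaux in
  rw [RcD, corr hc1 hc2 hf hΞinv]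
  · have hRc : (fun q => Rc f Ξ q i j k l)
        = fun q => (1 / 2) * ((d0 j * d0 l) * F2c c k i q - (d0 j * d0 k) * F2c c l i q
            - (d0 i * d0 l) * F2c c k j q + (d0 i * d0 k) * F2c c l j q) :=
      funext fun q => Rc_eq hc1 hc2 hf hΞinv q i j k l
    rw [hRc, pd_comb4 _ _ _ _ _ _ _ _ _ _ (diffAt_F2c k i p) (diffAt_F2c l i p)
      (diffAt_F2c k j p) (diffAt_F2c l j p)]
    rw [pdF2 k i n p, pdF2 l i n p, pdF2 k j n p, pdF2 l j n p]
    rw [hS p i l n, hS p j k n, hS p i k n, hS p j l n, hL j k, hL i l, hL j l, hL i k]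
    rw [S_chain hc1 hc2 hf, S_chain hc1 hc2 hf, S_chain hc1 hc2 hf, S_chain hc1 hc2 hf]
    rw [ite_d0, ite_d0, ite_d0, ite_d0]
    rw [F3c_rot hc1 hc2 k i n, F3c_rot hc1 hc2 l i n, F3c_rot hc1 hc2 k j n,
      F3c_rot hc1 hc2 l j n]
    ring
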